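/- Let A be an arrangement of 12 distinct lines in P^2(C) all of whose multiple points have multiplicity at most 5. If A admits a non-constant 2-cocycle η : A → F_2, then A is a (4,3)-net, i.e. A admits a partition into four classes of three lines each such that whenever two lines from different classes meet, their intersection point lies on exactly one line from each of the four classes. -/

import Mathlib

open scoped Classical

noncomputable section

/-- The complex projective plane `P²(ℂ)`. -/
abbrev ProjPlane : Type := Projectivization ℂ (Fin 3 → ℂ)

/-- A subset of `P²(ℂ)` is a projective line if it is the zero locus of a nonzero
linear form. -/
def IsProjLine (S : Set ProjPlane) : Prop :=
  ∃ f : (Fin 3 → ℂ) →ₗ[ℂ] ℂ, f ≠ 0 ∧ S = {p : ProjPlane | f p.rep = 0}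

/-- The lines of the arrangement `A` passing through the point `p`. -/
def linesThrough (A : Finset (Set ProjPlane)) (p : ProjPlane) : Finset (Set ProjPlane) :=
  A.filter fun L => p ∈ L

/-- The multiplicity of a point `p` with respect to the arrangement `A`. -/
def mult (A : Finset (Set ProjPlane)) (p : ProjPlane) : ℕ :=
  (linesThrough A p).card

/-- `p` is a multiple point of the arrangement `A` (at least two lines pass through it). -/
def IsMultPoint (A : Finset (Set ProjPlane)) (p : ProjPlane) : Prop :=
  2 ≤ mult A p

/-- A `q`-cocycle of the line arrangement `A`: for every multiple point `p`,
if `q` divides the multiplicity then the values of `η` on the lines through `p` sum to `0`,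
and otherwise `η` is constant on the lines through `p`. -/
def IsCocycle (q : ℕ) (A : Finset (Set ProjPlane)) (η : Set ProjPlane → ZMod q) : Prop :=
  ∀ p : ProjPlane, IsMultPoint A p →
    ((q ∣ mult A p → ∑ L ∈ linesThrough A p, η L = 0) ∧
     (¬ q ∣ mult A p → ∀ L ∈ linesThrough A p, ∀ K ∈ linesThrough A p, η L = η K))

/-- A function on lines is non-constant on the arrangement `A`. -/
def NonConstant {α : Type*} (A : Finset (Set ProjPlane)) (η : Set ProjPlane → α) : Prop :=
  ∃ L ∈ A, ∃ K ∈ A, η L ≠ η K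

/-- A `(k,q)`-net structure on the line arrangement `A`, with classes `C 0, …, C (k-1)`:
the classes partition `A` into `k` classes of `q` lines each, and whenever two lines from
different classes meet, their intersection point lies on exactly one line of each class. -/
def IsNet (k q : ℕ) (A : Finset (Set ProjPlane)) (C : Fin k → Finset (Set ProjPlane)) : Prop :=
  (∀ L ∈ A, IsProjLine L) ∧
  A.card = k * q ∧
  (∀ i, (C i).card = q) ∧
  (∀ i j, i ≠ j → Disjoint (C i) (C j)) ∧
  (∀ i, C i ⊆ A) ∧
  (∀ L ∈ A, ∃ i, L ∈ C i) ∧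
  (∀ i j, i ≠ j → ∀ L ∈ C i, ∀ K ∈ C j, ∀ p : ProjPlane, p ∈ L → p ∈ K →
    ∀ m : Fin k, ∃! N, N ∈ C m ∧ p ∈ N)

/-- Lattice isomorphism of two line arrangements: a bijection between the lines such that
a subfamily of lines has a common point iff the image subfamily has a common point. -/
def LatticeIso (A B : Finset (Set ProjPlane)) : Prop :=
  ∃ φ : Set ProjPlane → Set ProjPlane, Set.BijOn φ ↑A ↑B ∧
    ∀ S : Finset (Set ProjPlane), S ⊆ A →
      ((∃ p : ProjPlane, ∀ L ∈ S, p ∈ L) ↔ ∃ p : ProjPlane, ∀ L ∈ S, p ∈ φ L)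

/-- The projective line with homogeneous equation `a·x + b·y + c·z = 0`. -/
def lineOf (a b c : ℂ) : Set ProjPlane :=
  {p : ProjPlane | a * p.rep 0 + b * p.rep 1 + c * p.rep 2 = 0}


namespace S17

/-! ### Geometry: two distinct projective lines meet in exactly one point -/

lemma meet_exists {S T : Set ProjPlane} (hS : IsProjLine S) (hT : IsProjLine T) :
    ∃ p, p ∈ S ∧ p ∈ T := by
  obtain ⟨f, hf, rfl⟩ := hS
  obtain ⟨g, hg, rfl⟩ := hT
  set h : (Fin 3 → ℂ) →ₗ[ℂ] ℂ × ℂ := f.prod g with hh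
  have hker : LinearMap.ker h ≠ ⊥ := by
    intro hk
    have hinj : Function.Injective h := LinearMap.ker_eq_bot.mp hk
    have := LinearMap.finrank_le_finrank_of_injective hinj
    simp [Module.finrank_fin_fun, Module.finrank_prod] at this
  obtain ⟨v, hv, hv0⟩ := Submodule.exists_mem_ne_zero_of_ne_bot hker
  refine ⟨Projectivization.mk ℂ v hv0, ?_, ?_⟩ <;>
  · obtain ⟨a, ha⟩ := Projectivization.exists_smul_eq_mk_rep ℂ v hv0
    have hfv : f v = 0 ∧ g v = 0 := by
      have h2 := hv
      rw [LinearMap.mem_ker] at h2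
      exact ⟨by simpa [hh] using congrArg Prod.fst h2, by simpa [hh] using congrArg Prod.snd h2⟩
    show _ = 0
    rw [← ha]
    simp [hfv.1, hfv.2]

lemma rep_indep {p q : ProjPlane} (h : p ≠ q) :
    LinearIndependent ℂ ![p.rep, q.rep] := by
  rw [LinearIndependent.pair_iff]
  intro s t hst
  by_cases ht : t = 0
  · subst ht
    simp only [smul_zero, zero_smul, add_zero] at hst
    rcases smul_eq_zero.mp hst with h1 | h1
    · exact ⟨h1, rfl⟩
    · exact absurd h1 p.rep_nonzero
  · exfalso
    have h1 : t • q.rep = -(s • p.rep) := eq_neg_of_add_eq_zero_right hst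
    have hq : q.rep = (-(t⁻¹ * s)) • p.rep := by
      have : q.rep = t⁻¹ • (t • q.rep) := by rw [smul_smul]; field_simp; rw [one_smul]
      rw [this, h1, smul_neg, smul_smul, neg_smul]
    have hc : (-(t⁻¹ * s)) ≠ 0 := by
      intro h0
      rw [h0, zero_smul] at hq
      exact q.rep_nonzero hq
    apply h
    rw [← p.mk_rep, ← q.mk_rep, Projectivization.mk_eq_mk_iff']
    refine ⟨(-(t⁻¹ * s))⁻¹, ?_⟩
    rw [hq, inv_smul_smul₀ hc]

lemma ker_eq_span {f : (Fin 3 → ℂ) →ₗ[ℂ] ℂ} (hf : f ≠ 0) {p q : ProjPlane} (hpq : p ≠ q)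
    (hp : f p.rep = 0) (hq : f q.rep = 0) :
    LinearMap.ker f = Submodule.span ℂ (Set.range ![p.rep, q.rep]) := by
  have indep := rep_indep hpq
  have hspan : Module.finrank ℂ (Submodule.span ℂ (Set.range ![p.rep, q.rep])) = 2 := by
    rw [finrank_span_eq_card indep]; simp
  have hr : Module.finrank ℂ (LinearMap.range f) = 1 := by
    have h1 : Module.finrank ℂ (LinearMap.range f) ≤ 1 := by
      simpa using Submodule.finrank_le (LinearMap.range f)
    have h2 : LinearMap.range f ≠ ⊥ := fun hb => hf (LinearMap.range_eq_bot.mp hb)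
    have h3 : Module.finrank ℂ (LinearMap.range f) ≠ 0 := by
      intro h0
      exact h2 (Submodule.finrank_eq_zero.mp h0)
    omega
  have hkf : Module.finrank ℂ (LinearMap.ker f) = 2 := by
    have := LinearMap.finrank_range_add_finrank_ker f
    rw [hr] at this
    simp [Module.finrank_fin_fun] at this
    omega
  have hle : Submodule.span ℂ (Set.range ![p.rep, q.rep]) ≤ LinearMap.ker f := by
    rw [Submodule.span_le]
    rintro x ⟨i, rfl⟩
    fin_cases i <;> simpa using (by assumption : _)
  exact (Submodule.eq_of_le_of_finrank_eq hle (by rw [hspan, hkf])).symm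

lemma line_unique {S T : Set ProjPlane} (hS : IsProjLine S) (hT : IsProjLine T)
    (hST : S ≠ T) {p q : ProjPlane} (hpS : p ∈ S) (hpT : p ∈ T) (hqS : q ∈ S) (hqT : q ∈ T) :
    p = q := by
  by_contra hpq
  apply hST
  obtain ⟨f, hf, rfl⟩ := hS
  obtain ⟨g, hg, rfl⟩ := hT
  have h1 := ker_eq_span hf hpq hpS hqS
  have h2 := ker_eq_span hg hpq hpT hqT
  ext x
  show f x.rep = 0 ↔ g x.rep = 0
  rw [← LinearMap.mem_ker, ← LinearMap.mem_ker, h1, h2]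

/-- The intersection point of two lines. -/
def meetPt (L K : Set ProjPlane) : ProjPlane :=
  if h : ∃ p, p ∈ L ∧ p ∈ K then h.choose else Classical.arbitrary ProjPlane

lemma meetPt_mem {L K : Set ProjPlane} (hL : IsProjLine L) (hK : IsProjLine K) :
    meetPt L K ∈ L ∧ meetPt L K ∈ K := by
  have h : ∃ p, p ∈ L ∧ p ∈ K := meet_exists hL hK
  rw [meetPt, dif_pos h]
  exact h.choose_spec

lemma meetPt_unique {L K : Set ProjPlane} (hL : IsProjLine L) (hK : IsProjLine K)
    (hne : L ≠ K) {p : ProjPlane} (h1 : p ∈ L) (h2 : p ∈ K) : p = meetPt L K :=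
  line_unique hL hK hne h1 h2 (meetPt_mem hL hK).1 (meetPt_mem hL hK).2

/-! ### Combinatorial setup -/

/-- Bundle of hypotheses. -/
structure Good (A : Finset (Set ProjPlane)) (η : Set ProjPlane → ZMod 2) : Prop where
  lines : ∀ L ∈ A, IsProjLine L
  card12 : A.card = 12
  mult5 : ∀ p : ProjPlane, IsMultPoint A p → mult A p ≤ 5
  cocycle : IsCocycle 2 A η
  nc : NonConstant A η

variable {A : Finset (Set ProjPlane)} {η : Set ProjPlane → ZMod 2}

/-- A point lying on two lines of the arrangement with different cocycle values. -/
def Mixed (A : Finset (Set ProjPlane)) (η : Set ProjPlane → ZMod 2) (p : ProjPlane) : Prop :=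
  ∃ L ∈ A, ∃ K ∈ A, p ∈ L ∧ p ∈ K ∧ η L ≠ η K

/-- The lines of the arrangement with cocycle value ε. -/
def XF (A : Finset (Set ProjPlane)) (η : Set ProjPlane → ZMod 2) (ε : ZMod 2) :
    Finset (Set ProjPlane) :=
  A.filter fun L => η L = ε

/-- The lines through `p` with cocycle value ε. -/
def lAt (A : Finset (Set ProjPlane)) (η : Set ProjPlane → ZMod 2) (p : ProjPlane) (ε : ZMod 2) :
    Finset (Set ProjPlane) :=
  (linesThrough A p).filter fun L => η L = ε

lemma zmod2_cases (a : ZMod 2) : a = 0 ∨ a = 1 := by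
  fin_cases a
  · exact Or.inl rfl
  · exact Or.inr rfl

lemma mem_lAt {p : ProjPlane} {ε : ZMod 2} {L : Set ProjPlane} :
    L ∈ lAt A η p ε ↔ L ∈ A ∧ p ∈ L ∧ η L = ε := by
  simp [lAt, linesThrough, Finset.mem_filter, and_assoc]

lemma mem_XF {ε : ZMod 2} {L : Set ProjPlane} : L ∈ XF A η ε ↔ L ∈ A ∧ η L = ε := by
  simp [XF, Finset.mem_filter]

/-- Structure of a mixed point: multiplicity 4, two lines of each value. -/
lemma mixed_struct (hG : Good A η) {p : ProjPlane} (hp : Mixed A η p) :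
    mult A p = 4 ∧ ∀ ε : ZMod 2, (lAt A η p ε).card = 2 := by
  obtain ⟨L, hLA, K, hKA, hpL, hpK, hLK⟩ := hp
  have hLKne : L ≠ K := fun h => hLK (by rw [h])
  have hLmem : L ∈ linesThrough A p := by simp [linesThrough, hLA, hpL]
  have hKmem : K ∈ linesThrough A p := by simp [linesThrough, hKA, hpK]
  have h2 : 2 ≤ mult A p := by
    have hsub : ({L, K} : Finset (Set ProjPlane)) ⊆ linesThrough A p := by
      intro x hx
      rcases Finset.mem_insert.mp hx with rfl | hx
      · exact hLmem
      · rw [Finset.mem_singleton.mp hx]; exact hKmem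
    calc 2 = ({L, K} : Finset (Set ProjPlane)).card := (Finset.card_pair hLKne).symm
    _ ≤ _ := Finset.card_le_card hsub
  have hMP : IsMultPoint A p := h2
  have h5 := hG.mult5 p hMP
  obtain ⟨hdvd, hconst⟩ := hG.cocycle p hMP
  have hdiv : 2 ∣ mult A p := by
    by_contra h
    exact hLK (hconst h L hLmem K hKmem)
  have hsum := hdvd hdiv
  have hsum1 : ∑ M ∈ linesThrough A p, η M = ((lAt A η p 1).card : ZMod 2) := by
    rw [← Finset.sum_filter_add_sum_filter_not (linesThrough A p) (fun M => η M = 1) η]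
    have e1 : ∑ x ∈ (linesThrough A p).filter (fun M => η M = 1), η x
        = ((lAt A η p 1).card : ZMod 2) := by
      rw [Finset.sum_congr rfl (fun x hx => (Finset.mem_filter.mp hx).2)]
      simp [lAt, mul_one]
    have e2 : ∑ x ∈ (linesThrough A p).filter (fun M => ¬ η M = 1), η x = 0 := by
      apply Finset.sum_eq_zero
      intro x hx
      have := (Finset.mem_filter.mp hx).2
      rcases zmod2_cases (η x) with h | h
      · exact h
      · exact absurd h this
    rw [e1, e2, add_zero]
  have hc1 : ((lAt A η p 1).card : ZMod 2) = 0 := by rw [← hsum1]; exact hsum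
  have hdvd1 : 2 ∣ (lAt A η p 1).card := by
    rwa [ZMod.natCast_eq_zero_iff] at hc1
  have hadd : (lAt A η p 0).card + (lAt A η p 1).card = mult A p := by
    rw [mult, ← Finset.card_filter_add_card_filter_not
      (s := linesThrough A p) (p := fun M => η M = 0)]
    congr 1
    apply congrArg
    apply Finset.filter_congr
    intro x _
    rcases zmod2_cases (η x) with h | h <;> simp [h]
  have hval : (η L = 0 ∧ η K = 1) ∨ (η L = 1 ∧ η K = 0) := by
    rcases zmod2_cases (η L) with h | h <;> rcases zmod2_cases (η K) with h' | h'
    · exact absurd (h.trans h'.symm) hLK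
    · exact Or.inl ⟨h, h'⟩
    · exact Or.inr ⟨h, h'⟩
    · exact absurd (h.trans h'.symm) hLK
  have h0ne : 1 ≤ (lAt A η p 0).card := by
    rcases hval with ⟨h, _⟩ | ⟨_, h⟩
    · exact Finset.card_pos.mpr ⟨L, mem_lAt.mpr ⟨hLA, hpL, h⟩⟩
    · exact Finset.card_pos.mpr ⟨K, mem_lAt.mpr ⟨hKA, hpK, h⟩⟩
  have h1ne : 1 ≤ (lAt A η p 1).card := by
    rcases hval with ⟨_, h⟩ | ⟨h, _⟩
    · exact Finset.card_pos.mpr ⟨K, mem_lAt.mpr ⟨hKA, hpK, h⟩⟩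
    · exact Finset.card_pos.mpr ⟨L, mem_lAt.mpr ⟨hLA, hpL, h⟩⟩
  have hm4 : mult A p = 4 ∧ (lAt A η p 0).card = 2 ∧ (lAt A η p 1).card = 2 := by omega
  refine ⟨hm4.1, fun ε => ?_⟩
  rcases zmod2_cases ε with rfl | rfl
  · exact hm4.2.1
  · exact hm4.2.2

lemma zmod2_ne_succ (ε : ZMod 2) : ε ≠ ε + 1 := by
  intro h
  have h2 : (0 : ZMod 2) = 1 := by
    nth_rewrite 1 [← add_zero ε] at h
    exact add_left_cancel h
  exact absurd h2 (by decide)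

lemma XF_disj : Disjoint (XF A η 0) (XF A η 1) := by
  rw [Finset.disjoint_left]
  intro L h0 h1
  have e0 := (mem_XF.mp h0).2
  have e1 := (mem_XF.mp h1).2
  rw [e0] at e1
  exact absurd e1 (by decide)

lemma XF_card_add (hG : Good A η) : (XF A η 0).card + (XF A η 1).card = 12 := by
  rw [← hG.card12]
  rw [← Finset.card_filter_add_card_filter_not (s := A) (p := fun M => η M = 0)]
  congr 1
  apply congrArg
  apply Finset.filter_congr
  intro x _
  rcases zmod2_cases (η x) with h | h <;> simp [h]

lemma XF_nonempty (hG : Good A η) (ε : ZMod 2) : (XF A η ε).Nonempty := by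
  obtain ⟨L, hLA, K, hKA, hLK⟩ := hG.nc
  rcases zmod2_cases ε with rfl | rfl <;>
    rcases zmod2_cases (η L) with h | h <;> rcases zmod2_cases (η K) with h' | h'
  · exact ⟨L, mem_XF.mpr ⟨hLA, h⟩⟩
  · exact ⟨L, mem_XF.mpr ⟨hLA, h⟩⟩
  · exact ⟨K, mem_XF.mpr ⟨hKA, h'⟩⟩
  · exact absurd (h.trans h'.symm) hLK
  · exact absurd (h.trans h'.symm) hLK
  · exact ⟨K, mem_XF.mpr ⟨hKA, h'⟩⟩
  · exact ⟨L, mem_XF.mpr ⟨hLA, h⟩⟩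
  · exact ⟨L, mem_XF.mpr ⟨hLA, h⟩⟩

lemma opp_ne {ε : ZMod 2} {L K : Set ProjPlane} (hL : L ∈ XF A η ε) (hK : K ∈ XF A η (ε + 1)) :
    L ≠ K := by
  intro h
  have e0 := (mem_XF.mp hL).2
  have e1 := (mem_XF.mp hK).2
  rw [h] at e0
  rw [e0] at e1
  exact zmod2_ne_succ ε e1

lemma meetPt_opp (hG : Good A η) {ε : ZMod 2} {L K : Set ProjPlane}
    (hL : L ∈ XF A η ε) (hK : K ∈ XF A η (ε + 1)) :
    meetPt L K ∈ L ∧ meetPt L K ∈ K ∧ Mixed A η (meetPt L K) := by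
  have hLA := (mem_XF.mp hL).1
  have hKA := (mem_XF.mp hK).1
  have hmem := meetPt_mem (hG.lines L hLA) (hG.lines K hKA)
  refine ⟨hmem.1, hmem.2, L, hLA, K, hKA, hmem.1, hmem.2, ?_⟩
  rw [(mem_XF.mp hL).2, (mem_XF.mp hK).2]
  exact zmod2_ne_succ ε

lemma fiber_eq (hG : Good A η) {ε : ZMod 2} {L : Set ProjPlane} (hL : L ∈ XF A η ε)
    {p : ProjPlane} (hp : p ∈ (XF A η (ε + 1)).image (fun K => meetPt L K)) :
    (XF A η (ε + 1)).filter (fun K => meetPt L K = p) = lAt A η p (ε + 1)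
      ∧ Mixed A η p ∧ p ∈ L := by
  obtain ⟨K0, hK0, hpK0⟩ := Finset.mem_image.mp hp
  obtain ⟨h1, h2, h3⟩ := meetPt_opp hG hL hK0
  subst hpK0
  refine ⟨?_, h3, h1⟩
  ext K
  simp only [Finset.mem_filter, mem_lAt, mem_XF]
  constructor
  · rintro ⟨⟨hKA, hKv⟩, hKe⟩
    refine ⟨hKA, ?_, hKv⟩
    rw [← hKe]
    exact (meetPt_mem (hG.lines L (mem_XF.mp hL).1) (hG.lines K hKA)).2
  · rintro ⟨hKA, hpK, hKv⟩
    refine ⟨⟨hKA, hKv⟩, ?_⟩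
    exact (meetPt_unique (hG.lines L (mem_XF.mp hL).1) (hG.lines K hKA)
      (opp_ne hL (mem_XF.mpr ⟨hKA, hKv⟩)) h1 hpK).symm

lemma card_opp (hG : Good A η) {ε : ZMod 2} {L : Set ProjPlane} (hL : L ∈ XF A η ε) :
    (XF A η (ε + 1)).card = 2 * ((XF A η (ε + 1)).image (fun K => meetPt L K)).card := by
  rw [Finset.card_eq_sum_card_image (fun K => meetPt L K) (XF A η (ε + 1))]
  rw [Finset.sum_congr rfl (fun p hp => ?_), Finset.sum_const, smul_eq_mul, mul_comm]
  obtain ⟨he, hmix, _⟩ := fiber_eq hG hL hp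
  rw [he]
  exact (mixed_struct hG hmix).2 (ε + 1)

/-- The second line of value ε through a (mixed) point `p` on `L`. -/
def otherLine (A : Finset (Set ProjPlane)) (η : Set ProjPlane → ZMod 2) (ε : ZMod 2)
    (L : Set ProjPlane) (p : ProjPlane) : Set ProjPlane :=
  if h : ∃ M, (lAt A η p ε).erase L = {M} then h.choose else ∅

lemma otherLine_spec (hG : Good A η) {ε : ZMod 2} {L : Set ProjPlane} (hL : L ∈ XF A η ε)
    {p : ProjPlane} (hpL : p ∈ L) (hp : Mixed A η p) :
    otherLine A η ε L p ∈ XF A η ε ∧ otherLine A η ε L p ≠ L ∧ p ∈ otherLine A η ε L p ∧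
      lAt A η p ε = {L, otherLine A η ε L p} := by
  have hcard : (lAt A η p ε).card = 2 := (mixed_struct hG hp).2 ε
  have hLmem : L ∈ lAt A η p ε := mem_lAt.mpr ⟨(mem_XF.mp hL).1, hpL, (mem_XF.mp hL).2⟩
  have hec : ((lAt A η p ε).erase L).card = 1 := by
    rw [Finset.card_erase_of_mem hLmem, hcard]
  obtain ⟨M, hM⟩ := Finset.card_eq_one.mp hec
  have hex : ∃ M, (lAt A η p ε).erase L = {M} := ⟨M, hM⟩
  rw [otherLine, dif_pos hex]
  set M' := hex.choose with hM'
  have hMspec : (lAt A η p ε).erase L = {M'} := hex.choose_spec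
  have hM'mem : M' ∈ (lAt A η p ε).erase L := by rw [hMspec]; exact Finset.mem_singleton_self _
  have hM'ne : M' ≠ L := (Finset.mem_erase.mp hM'mem).1
  have hM'lAt : M' ∈ lAt A η p ε := (Finset.mem_erase.mp hM'mem).2
  obtain ⟨hM'A, hpM', hM'v⟩ := mem_lAt.mp hM'lAt
  refine ⟨mem_XF.mpr ⟨hM'A, hM'v⟩, hM'ne, hpM', ?_⟩
  rw [← Finset.insert_erase hLmem, hMspec]

lemma otherLine_injOn (hG : Good A η) {ε : ZMod 2} {L : Set ProjPlane} (hL : L ∈ XF A η ε)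
    {p q : ProjPlane} (hpL : p ∈ L) (hp : Mixed A η p) (hqL : q ∈ L) (hq : Mixed A η q)
    (heq : otherLine A η ε L p = otherLine A η ε L q) : p = q := by
  obtain ⟨hpX, hpne, hpmem, _⟩ := otherLine_spec hG hL hpL hp
  obtain ⟨hqX, hqne, hqmem, _⟩ := otherLine_spec hG hL hqL hq
  have hLA := (mem_XF.mp hL).1
  have hMA := (mem_XF.mp hpX).1
  exact line_unique (hG.lines L hLA) (hG.lines _ hMA) (Ne.symm hpne) hpL hpmem hqL
    (heq ▸ hqmem)

lemma cards_six (hG : Good A η) (ε : ZMod 2) : (XF A η ε).card = 6 := by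
  have key : ∀ δ : ZMod 2, (XF A η (δ + 1)).card ≤ 2 * ((XF A η δ).card - 1) ∧
      2 ∣ (XF A η (δ + 1)).card := by
    intro δ
    obtain ⟨L, hL⟩ := XF_nonempty hG δ
    have hco := card_opp hG hL
    constructor
    · rw [hco]
      have hinj : Set.InjOn (otherLine A η δ L)
          ((XF A η (δ + 1)).image (fun K => meetPt L K)) := by
        intro p hp q hq heq
        obtain ⟨_, hpm, hpL⟩ := fiber_eq hG hL hp
        obtain ⟨_, hqm, hqL⟩ := fiber_eq hG hL hq
        exact otherLine_injOn hG hL hpL hpm hqL hqm heq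
      have hmaps : ∀ p ∈ (XF A η (δ + 1)).image (fun K => meetPt L K),
          otherLine A η δ L p ∈ (XF A η δ).erase L := by
        intro p hp
        obtain ⟨_, hpm, hpL⟩ := fiber_eq hG hL hp
        obtain ⟨hX, hne, _, _⟩ := otherLine_spec hG hL hpL hpm
        exact Finset.mem_erase.mpr ⟨hne, hX⟩
      have := Finset.card_le_card_of_injOn _ hmaps hinj
      rw [Finset.card_erase_of_mem hL] at this
      omega
    · exact ⟨_, hco⟩
  have k0 := key 0
  have k1 := key 1
  have h01 : (0 : ZMod 2) + 1 = 1 := by decide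
  have h10 : (1 : ZMod 2) + 1 = 0 := by decide
  rw [h01] at k0
  rw [h10] at k1
  have hadd := XF_card_add hG
  have hne0 : 1 ≤ (XF A η 0).card := Finset.card_pos.mpr (XF_nonempty hG 0)
  have hne1 : 1 ≤ (XF A η 1).card := Finset.card_pos.mpr (XF_nonempty hG 1)
  rcases zmod2_cases ε with rfl | rfl <;> omega

/-- Two lines are adjacent if they meet at a mixed point. -/
def Adjb (A : Finset (Set ProjPlane)) (η : Set ProjPlane → ZMod 2)
    (L M : Set ProjPlane) : Prop :=
  L ≠ M ∧ ∃ p, Mixed A η p ∧ p ∈ L ∧ p ∈ M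

lemma adj_symm {L M : Set ProjPlane} (h : Adjb A η L M) : Adjb A η M L := by
  obtain ⟨hne, p, hm, h1, h2⟩ := h
  exact ⟨hne.symm, p, hm, h2, h1⟩

/-- Neighbours of L among value-ε lines. -/
def NbrF (A : Finset (Set ProjPlane)) (η : Set ProjPlane → ZMod 2) (ε : ZMod 2)
    (L : Set ProjPlane) : Finset (Set ProjPlane) :=
  (XF A η ε).filter fun M => Adjb A η L M

lemma nbr_eq_image (hG : Good A η) {ε : ZMod 2} {L : Set ProjPlane} (hL : L ∈ XF A η ε) :
    NbrF A η ε L = ((XF A η (ε + 1)).image (fun K => meetPt L K)).image (otherLine A η ε L) := by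
  ext M
  simp only [NbrF, Finset.mem_filter, Finset.mem_image]
  constructor
  · rintro ⟨hMX, hne, p, hpm, hpL, hpM⟩
    have hc := (mixed_struct hG hpm).2 (ε + 1)
    have hNE : (lAt A η p (ε + 1)).Nonempty := by
      rw [← Finset.card_pos, hc]; omega
    obtain ⟨K, hK⟩ := hNE
    obtain ⟨hKA, hpK, hKv⟩ := mem_lAt.mp hK
    have hKX : K ∈ XF A η (ε + 1) := mem_XF.mpr ⟨hKA, hKv⟩
    have hpe : p = meetPt L K := meetPt_unique (hG.lines L (mem_XF.mp hL).1)
      (hG.lines K hKA) (opp_ne hL hKX) hpL hpK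
    refine ⟨p, ⟨K, hKX, hpe.symm⟩, ?_⟩
    obtain ⟨_, hone, homem, hola⟩ := otherLine_spec hG hL hpL hpm
    have hMlat : M ∈ lAt A η p ε := mem_lAt.mpr ⟨(mem_XF.mp hMX).1, hpM, (mem_XF.mp hMX).2⟩
    rw [hola] at hMlat
    rcases Finset.mem_insert.mp hMlat with rfl | hMs
    · exact absurd rfl hne
    · exact (Finset.mem_singleton.mp hMs).symm
  · rintro ⟨p, hp, rfl⟩
    have hp' : p ∈ (XF A η (ε + 1)).image (fun K => meetPt L K) := by
      obtain ⟨K, hK, he⟩ := hp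
      exact Finset.mem_image.mpr ⟨K, hK, he⟩
    obtain ⟨hfe, hpm, hpL⟩ := fiber_eq hG hL hp'
    obtain ⟨hoX, hone, homem, _⟩ := otherLine_spec hG hL hpL hpm
    exact ⟨hoX, Ne.symm hone, p, hpm, hpL, homem⟩

lemma nbr_card (hG : Good A η) {ε : ZMod 2} {L : Set ProjPlane} (hL : L ∈ XF A η ε) :
    (NbrF A η ε L).card = 3 := by
  rw [nbr_eq_image hG hL]
  have hinj : Set.InjOn (otherLine A η ε L)
      ((XF A η (ε + 1)).image (fun K => meetPt L K)) := by
    intro p hp q hq heq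
    obtain ⟨_, hpm, hpL⟩ := fiber_eq hG hL hp
    obtain ⟨_, hqm, hqL⟩ := fiber_eq hG hL hq
    exact otherLine_injOn hG hL hpL hpm hqL hqm heq
  rw [Finset.card_image_of_injOn hinj]
  have hco := card_opp hG hL
  have h6 := cards_six hG (ε + 1)
  omega

lemma no_tri (hG : Good A η) {ε : ZMod 2} {L M N : Set ProjPlane} (hL : L ∈ XF A η ε)
    (hM : M ∈ XF A η ε) (hN : N ∈ XF A η ε)
    (hLM : Adjb A η L M) (hLN : Adjb A η L N) (hMN : Adjb A η M N) : False := by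
  obtain ⟨hLMne, p, hpm, hpL, hpM⟩ := hLM
  obtain ⟨hLNne, q, hqm, hqL, hqN⟩ := hLN
  obtain ⟨hMNne, r, hrm, hrM, hrN⟩ := hMN
  have lat_eq : ∀ (x : ProjPlane) (E F : Set ProjPlane), Mixed A η x → E ∈ XF A η ε →
      F ∈ XF A η ε → E ≠ F → x ∈ E → x ∈ F → lAt A η x ε = {E, F} := by
    intro x E F hx hE hF hEF hxE hxF
    have hc := (mixed_struct hG hx).2 ε
    have hsub : ({E, F} : Finset (Set ProjPlane)) ⊆ lAt A η x ε := by
      intro z hz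
      rcases Finset.mem_insert.mp hz with rfl | hz
      · exact mem_lAt.mpr ⟨(mem_XF.mp hE).1, hxE, (mem_XF.mp hE).2⟩
      · rw [Finset.mem_singleton.mp hz]
        exact mem_lAt.mpr ⟨(mem_XF.mp hF).1, hxF, (mem_XF.mp hF).2⟩
    exact (Finset.eq_of_subset_of_card_le hsub
      (by rw [hc, Finset.card_pair hEF])).symm
  have hlp := lat_eq p L M hpm hL hM hLMne hpL hpM
  have hlq := lat_eq q L N hqm hL hN hLNne hqL hqN
  have hlr := lat_eq r M N hrm hM hN hMNne hrM hrN
  have hnotmem : ∀ (x : ProjPlane) (E F G : Set ProjPlane), lAt A η x ε = {E, F} →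
      G ∈ XF A η ε → G ≠ E → G ≠ F → x ∉ G := by
    intro x E F G hx hG' hGE hGF hc
    have : G ∈ lAt A η x ε := mem_lAt.mpr ⟨(mem_XF.mp hG').1, hc, (mem_XF.mp hG').2⟩
    rw [hx] at this
    rcases Finset.mem_insert.mp this with h | h
    · exact hGE h
    · exact hGF (Finset.mem_singleton.mp h)
  have hpnotN : p ∉ N := hnotmem p L M N hlp hN (fun h => hLNne h.symm) (fun h => hMNne h.symm)
  have hqnotM : q ∉ M := hnotmem q L N M hlq hM (fun h => hLMne h.symm) hMNne
  have hrnotL : r ∉ L := hnotmem r M N L hlr hL hLMne hLNne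
  have hpq : p ≠ q := fun h => hpnotN (h ▸ hqN)
  have hpr : p ≠ r := fun h => hrnotL (h ▸ hpL)
  have hqr : q ≠ r := fun h => hrnotL (h ▸ hqL)
  have hYp2 : (lAt A η p (ε + 1)).card = 2 := (mixed_struct hG hpm).2 (ε + 1)
  have hYq2 : (lAt A η q (ε + 1)).card = 2 := (mixed_struct hG hqm).2 (ε + 1)
  have hYr2 : (lAt A η r (ε + 1)).card = 2 := (mixed_struct hG hrm).2 (ε + 1)
  have hYsub : ∀ x : ProjPlane, lAt A η x (ε + 1) ⊆ XF A η (ε + 1) := by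
    intro x K hK
    exact mem_XF.mpr ⟨(mem_lAt.mp hK).1, (mem_lAt.mp hK).2.2⟩
  have hdisj : ∀ (x y : ProjPlane) (E : Set ProjPlane), x ≠ y → E ∈ XF A η ε → x ∈ E →
      y ∈ E → Disjoint (lAt A η x (ε + 1)) (lAt A η y (ε + 1)) := by
    intro x y E hxy hE hxE hyE
    rw [Finset.disjoint_left]
    intro K hKx hKy
    obtain ⟨hKA, hxK, hKv⟩ := mem_lAt.mp hKx
    obtain ⟨_, hyK, _⟩ := mem_lAt.mp hKy
    exact hxy (line_unique (hG.lines K hKA) (hG.lines E (mem_XF.mp hE).1)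
      (Ne.symm (opp_ne hE (mem_XF.mpr ⟨hKA, hKv⟩))) hxK hxE hyK hyE)
  have d_pq := hdisj p q L hpq hL hpL hqL
  have d_pr := hdisj p r M hpr hM hpM hrM
  have d_qr := hdisj q r N hqr hN hqN hrN
  have hUsub : lAt A η p (ε + 1) ∪ lAt A η q (ε + 1) ∪ lAt A η r (ε + 1) ⊆ XF A η (ε + 1) :=
    Finset.union_subset (Finset.union_subset (hYsub p) (hYsub q)) (hYsub r)
  have hUcard : (lAt A η p (ε + 1) ∪ lAt A η q (ε + 1) ∪ lAt A η r (ε + 1)).card = 6 := by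
    rw [Finset.card_union_of_disjoint (Finset.disjoint_union_left.mpr ⟨d_pr, d_qr⟩),
      Finset.card_union_of_disjoint d_pq, hYp2, hYq2, hYr2]
  have hUeq : lAt A η p (ε + 1) ∪ lAt A η q (ε + 1) ∪ lAt A η r (ε + 1) = XF A η (ε + 1) :=
    Finset.eq_of_subset_of_card_le hUsub (by rw [cards_six hG (ε + 1), hUcard])
  obtain ⟨K5, K6, hK56, hYr⟩ := Finset.card_eq_two.mp hYr2
  have hK5Yr : K5 ∈ lAt A η r (ε + 1) := by rw [hYr]; exact Finset.mem_insert_self _ _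
  have hK6Yr : K6 ∈ lAt A η r (ε + 1) := by
    rw [hYr]; exact Finset.mem_insert_of_mem (Finset.mem_singleton_self _)
  obtain ⟨hK5A, hrK5, hK5v⟩ := mem_lAt.mp hK5Yr
  obtain ⟨hK6A, hrK6, hK6v⟩ := mem_lAt.mp hK6Yr
  have hK5X : K5 ∈ XF A η (ε + 1) := mem_XF.mpr ⟨hK5A, hK5v⟩
  obtain ⟨hsL, hsK5, hsm⟩ := meetPt_opp hG hL hK5X
  set s := meetPt L K5 with hs
  have hsr : s ≠ r := fun h => hrnotL (h ▸ hsL)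
  have hsp : s ≠ p := by
    intro h
    have : K5 ∈ lAt A η p (ε + 1) := mem_lAt.mpr ⟨hK5A, h ▸ hsK5, hK5v⟩
    exact Finset.disjoint_left.mp d_pr this hK5Yr
  have hsq : s ≠ q := by
    intro h
    have : K5 ∈ lAt A η q (ε + 1) := mem_lAt.mpr ⟨hK5A, h ▸ hsK5, hK5v⟩
    exact Finset.disjoint_left.mp d_qr this hK5Yr
  have hYssub : lAt A η s (ε + 1) ⊆ lAt A η r (ε + 1) := by
    intro K hK
    have hKX : K ∈ XF A η (ε + 1) := hYsub s hK
    have hKU : K ∈ lAt A η p (ε + 1) ∪ lAt A η q (ε + 1) ∪ lAt A η r (ε + 1) := by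
      rw [hUeq]; exact hKX
    obtain ⟨hKA, hsK, hKv⟩ := mem_lAt.mp hK
    rcases Finset.mem_union.mp hKU with h' | h'
    · rcases Finset.mem_union.mp h' with h'' | h''
      · exfalso
        obtain ⟨_, hpK, _⟩ := mem_lAt.mp h''
        exact hsp (line_unique (hG.lines K hKA) (hG.lines L (mem_XF.mp hL).1)
          (Ne.symm (opp_ne hL (mem_XF.mpr ⟨hKA, hKv⟩))) hsK hsL hpK hpL)
      · exfalso
        obtain ⟨_, hqK, _⟩ := mem_lAt.mp h''
        exact hsq (line_unique (hG.lines K hKA) (hG.lines L (mem_XF.mp hL).1)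
          (Ne.symm (opp_ne hL (mem_XF.mpr ⟨hKA, hKv⟩))) hsK hsL hqK hqL)
    · exact h'
  have hYs2 : (lAt A η s (ε + 1)).card = 2 := (mixed_struct hG hsm).2 (ε + 1)
  have hYseq : lAt A η s (ε + 1) = lAt A η r (ε + 1) :=
    Finset.eq_of_subset_of_card_le hYssub (by rw [hYr2, hYs2])
  have hsK6 : s ∈ K6 := by
    have : K6 ∈ lAt A η s (ε + 1) := by rw [hYseq]; exact hK6Yr
    exact (mem_lAt.mp this).2.1
  exact hsr (line_unique (hG.lines K5 hK5A) (hG.lines K6 hK6A) hK56 hsK5 hsK6 hrK5 hrK6)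

lemma bipart (hG : Good A η) (ε : ZMod 2) : ∃ C1 C2 : Finset (Set ProjPlane),
    C1 ∪ C2 = XF A η ε ∧ Disjoint C1 C2 ∧ C1.card = 3 ∧ C2.card = 3 ∧
    (∀ L ∈ C1, ∀ M ∈ C1, ¬ Adjb A η L M) ∧ (∀ L ∈ C2, ∀ M ∈ C2, ¬ Adjb A η L M) ∧
    (∀ L ∈ C1, ∀ M ∈ C2, Adjb A η L M) := by
  obtain ⟨L0, hL0⟩ := XF_nonempty hG ε
  refine ⟨XF A η ε \ NbrF A η ε L0, NbrF A η ε L0, ?_, Finset.sdiff_disjoint, ?_, ?_, ?_, ?_, ?_⟩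
  case _ => exact Finset.sdiff_union_of_subset (Finset.filter_subset _ _)
  all_goals
    have hC2sub : NbrF A η ε L0 ⊆ XF A η ε := Finset.filter_subset _ _
  all_goals
    have hC2card : (NbrF A η ε L0).card = 3 := nbr_card hG hL0
  case _ => rw [Finset.card_sdiff_of_subset hC2sub, cards_six hG ε, hC2card]
  case _ => exact hC2card
  all_goals
    have hC2ind : ∀ M ∈ NbrF A η ε L0, ∀ M' ∈ NbrF A η ε L0, ¬ Adjb A η M M' := by
      intro M hM M' hM' hadj
      obtain ⟨hMX, hadjM⟩ := Finset.mem_filter.mp hM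
      obtain ⟨hM'X, hadjM'⟩ := Finset.mem_filter.mp hM'
      exact no_tri hG hL0 hMX hM'X hadjM hadjM' hadj
  all_goals
    have hkey : ∀ M ∈ NbrF A η ε L0, NbrF A η ε M = XF A η ε \ NbrF A η ε L0 := by
      intro M hM
      obtain ⟨hMX, hadjM⟩ := Finset.mem_filter.mp hM
      have hsub : NbrF A η ε M ⊆ XF A η ε \ NbrF A η ε L0 := by
        intro M' hM'
        obtain ⟨hM'X, hadj⟩ := Finset.mem_filter.mp hM'
        rw [Finset.mem_sdiff]
        exact ⟨hM'X, fun hM'C2 => hC2ind M hM M' hM'C2 hadj⟩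
      refine Finset.eq_of_subset_of_card_le hsub ?_
      rw [Finset.card_sdiff_of_subset hC2sub, cards_six hG ε, hC2card, nbr_card hG hMX]
  all_goals
    have hcross : ∀ L ∈ XF A η ε \ NbrF A η ε L0, ∀ M ∈ NbrF A η ε L0, Adjb A η L M := by
      intro L hL M hM
      have : L ∈ NbrF A η ε M := by rw [hkey M hM]; exact hL
      exact adj_symm (Finset.mem_filter.mp this).2
  case _ =>
    intro z hz z' hz' hadj
    have hzX : z ∈ XF A η ε := (Finset.mem_sdiff.mp hz).1
    have hz'X : z' ∈ XF A η ε := (Finset.mem_sdiff.mp hz').1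
    have hsub : NbrF A η ε L0 ⊆ NbrF A η ε z := by
      intro M hM
      exact Finset.mem_filter.mpr ⟨hC2sub hM, hcross z hz M hM⟩
    have heq : NbrF A η ε L0 = NbrF A η ε z :=
      Finset.eq_of_subset_of_card_le hsub (by rw [nbr_card hG hzX, hC2card])
    have : z' ∈ NbrF A η ε L0 := by
      rw [heq]; exact Finset.mem_filter.mpr ⟨hz'X, hadj⟩
    exact (Finset.mem_sdiff.mp hz').2 this
  case _ => exact hC2ind
  case _ => exact hcross

lemma class_unique (hG : Good A η) {ε : ZMod 2} {C1 C2 : Finset (Set ProjPlane)}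
    (hu : C1 ∪ C2 = XF A η ε) (hd : Disjoint C1 C2)
    (h1 : ∀ L ∈ C1, ∀ M ∈ C1, ¬ Adjb A η L M)
    (h2 : ∀ L ∈ C2, ∀ M ∈ C2, ¬ Adjb A η L M)
    {p : ProjPlane} (hp : Mixed A η p) :
    ∃! N, N ∈ C1 ∧ p ∈ N := by
  have hc := (mixed_struct hG hp).2 ε
  obtain ⟨E, F, hEF, hEq⟩ := Finset.card_eq_two.mp hc
  have hE : E ∈ lAt A η p ε := by rw [hEq]; exact Finset.mem_insert_self _ _
  have hF : F ∈ lAt A η p ε := by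
    rw [hEq]; exact Finset.mem_insert_of_mem (Finset.mem_singleton_self _)
  obtain ⟨hEA, hpE, hEv⟩ := mem_lAt.mp hE
  obtain ⟨hFA, hpF, hFv⟩ := mem_lAt.mp hF
  have hadj : Adjb A η E F := ⟨hEF, p, hp, hpE, hpF⟩
  have hEX : E ∈ C1 ∪ C2 := by rw [hu]; exact mem_XF.mpr ⟨hEA, hEv⟩
  have hFX : F ∈ C1 ∪ C2 := by rw [hu]; exact mem_XF.mpr ⟨hFA, hFv⟩
  have hmem : ∀ N, N ∈ C1 → p ∈ N → N = E ∨ N = F := by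
    intro N hN hpN
    have hNX : N ∈ XF A η ε := by rw [← hu]; exact Finset.mem_union_left _ hN
    have hNl : N ∈ lAt A η p ε :=
      mem_lAt.mpr ⟨(mem_XF.mp hNX).1, hpN, (mem_XF.mp hNX).2⟩
    rw [hEq] at hNl
    rcases Finset.mem_insert.mp hNl with h | h
    · exact Or.inl h
    · exact Or.inr (Finset.mem_singleton.mp h)
  rcases Finset.mem_union.mp hEX with hE1 | hE2 <;> rcases Finset.mem_union.mp hFX with hF1 | hF2
  · exact absurd hadj (h1 E hE1 F hF1)
  · refine ⟨E, ⟨hE1, hpE⟩, ?_⟩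
    rintro N ⟨hN1, hpN⟩
    rcases hmem N hN1 hpN with rfl | rfl
    · rfl
    · exact absurd hF2 (Finset.disjoint_left.mp hd hN1)
  · refine ⟨F, ⟨hF1, hpF⟩, ?_⟩
    rintro N ⟨hN1, hpN⟩
    rcases hmem N hN1 hpN with rfl | rfl
    · exact absurd hE2 (Finset.disjoint_left.mp hd hN1)
    · rfl
  · exact absurd hadj (h2 E hE2 F hF2)

lemma mixed_of_meet (hG : Good A η) {L K : Set ProjPlane} {p : ProjPlane}
    (hLA : L ∈ A) (hKA : K ∈ A) (hLK : L ≠ K) (hpL : p ∈ L) (hpK : p ∈ K)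
    (h : η L ≠ η K ∨ Adjb A η L K) : Mixed A η p := by
  rcases h with h | h
  · exact ⟨L, hLA, K, hKA, hpL, hpK, h⟩
  · obtain ⟨_, q, hqm, hqL, hqK⟩ := h
    have he : q = p := line_unique (hG.lines L hLA) (hG.lines K hKA) hLK hqL hqK hpL hpK
    exact he ▸ hqm

end S17

/-- an arrangement of 12 lines with points of multiplicity at most 5
admitting a non-constant 2-cocycle is a (4,3)-net. -/
theorem statement17 (A : Finset (Set ProjPlane))
    (hlines : ∀ L ∈ A, IsProjLine L) (hcard : A.card = 12)
    (hmult : ∀ p : ProjPlane, IsMultPoint A p → mult A p ≤ 5)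
    (η : Set ProjPlane → ZMod 2) (hη : IsCocycle 2 A η) (hnc : NonConstant A η) :
    ∃ C : Fin 4 → Finset (Set ProjPlane), IsNet 4 3 A C := by
  have hG : S17.Good A η := ⟨hlines, hcard, hmult, hη, hnc⟩
  obtain ⟨C1, C2, hu0, hd0, hc1, hc2, hi1, hi2, hx0⟩ := S17.bipart hG 0
  obtain ⟨D1, D2, hu1, hd1, hc3, hc4, hi3, hi4, hx1⟩ := S17.bipart hG 1
  have hC1X : C1 ⊆ S17.XF A η 0 := fun L hL => hu0 ▸ Finset.mem_union_left _ hL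
  have hC2X : C2 ⊆ S17.XF A η 0 := fun L hL => hu0 ▸ Finset.mem_union_right _ hL
  have hD1X : D1 ⊆ S17.XF A η 1 := fun L hL => hu1 ▸ Finset.mem_union_left _ hL
  have hD2X : D2 ⊆ S17.XF A η 1 := fun L hL => hu1 ▸ Finset.mem_union_right _ hL
  have hXA : ∀ ε : ZMod 2, S17.XF A η ε ⊆ A := fun ε => Finset.filter_subset _ _
  have hXd : Disjoint (S17.XF A η 0) (S17.XF A η 1) := S17.XF_disj
  have sC1 : C1 ⊆ A := fun L hL => hXA 0 (hC1X hL)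
  have sC2 : C2 ⊆ A := fun L hL => hXA 0 (hC2X hL)
  have sD1 : D1 ⊆ A := fun L hL => hXA 1 (hD1X hL)
  have sD2 : D2 ⊆ A := fun L hL => hXA 1 (hD2X hL)
  have hv1 : ∀ N ∈ C1, η N = 0 := fun N h => (S17.mem_XF.mp (hC1X h)).2
  have hv2 : ∀ N ∈ C2, η N = 0 := fun N h => (S17.mem_XF.mp (hC2X h)).2
  have hv3 : ∀ N ∈ D1, η N = 1 := fun N h => (S17.mem_XF.mp (hD1X h)).2
  have hv4 : ∀ N ∈ D2, η N = 1 := fun N h => (S17.mem_XF.mp (hD2X h)).2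
  have hmv : ∀ N N' : Set ProjPlane, η N = 0 → η N' = 1 → η N ≠ η N' := by
    intro N N' h h'
    rw [h, h']
    decide
  refine ⟨![C1, C2, D1, D2], hlines, by rw [hcard], ?_, ?_, ?_, ?_, ?_⟩
  · intro i
    fin_cases i
    · exact hc1
    · exact hc2
    · exact hc3
    · exact hc4
  · intro i j hij
    fin_cases i <;> fin_cases j <;>
      first
        | exact absurd rfl hij
        | exact hd0
        | exact hd0.symm
        | exact hd1
        | exact hd1.symm
        | exact hXd.mono hC1X hD1X
        | exact hXd.mono hC1X hD2X
        | exact hXd.mono hC2X hD1X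
        | exact hXd.mono hC2X hD2X
        | exact hXd.symm.mono hD1X hC1X
        | exact hXd.symm.mono hD1X hC2X
        | exact hXd.symm.mono hD2X hC1X
        | exact hXd.symm.mono hD2X hC2X
  · intro i
    fin_cases i
    · exact sC1
    · exact sC2
    · exact sD1
    · exact sD2
  · intro L hL
    rcases S17.zmod2_cases (η L) with h | h
    · have hLCC : L ∈ C1 ∪ C2 := by rw [hu0]; exact S17.mem_XF.mpr ⟨hL, h⟩
      rcases Finset.mem_union.mp hLCC with h' | h'
      · exact ⟨0, h'⟩
      · exact ⟨1, h'⟩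
    · have hLDD : L ∈ D1 ∪ D2 := by rw [hu1]; exact S17.mem_XF.mpr ⟨hL, h⟩
      rcases Finset.mem_union.mp hLDD with h' | h'
      · exact ⟨2, h'⟩
      · exact ⟨3, h'⟩
  · intro i j hij L hLi K hKj p hpL hpK
    have key : ∀ E F : Finset (Set ProjPlane), L ∈ E → K ∈ F → Disjoint E F →
        E ⊆ A → F ⊆ A → (η L ≠ η K ∨ S17.Adjb A η L K) → S17.Mixed A η p := by
      intro E F hE hF hd hEA hFA hor
      have hLK : L ≠ K := fun h => Finset.disjoint_left.mp hd hE (h ▸ hF)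
      exact S17.mixed_of_meet hG (hEA hE) (hFA hF) hLK hpL hpK hor
    have hmix : S17.Mixed A η p := by
      fin_cases i <;> fin_cases j <;>
        first
          | exact absurd rfl hij
          | exact key C1 C2 hLi hKj hd0 sC1 sC2 (Or.inr (hx0 L hLi K hKj))
          | exact key C2 C1 hLi hKj hd0.symm sC2 sC1 (Or.inr (S17.adj_symm (hx0 K hKj L hLi)))
          | exact key D1 D2 hLi hKj hd1 sD1 sD2 (Or.inr (hx1 L hLi K hKj))
          | exact key D2 D1 hLi hKj hd1.symm sD2 sD1 (Or.inr (S17.adj_symm (hx1 K hKj L hLi)))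
          | exact key C1 D1 hLi hKj (hXd.mono hC1X hD1X) sC1 sD1
              (Or.inl (hmv L K (hv1 L hLi) (hv3 K hKj)))
          | exact key C1 D2 hLi hKj (hXd.mono hC1X hD2X) sC1 sD2
              (Or.inl (hmv L K (hv1 L hLi) (hv4 K hKj)))
          | exact key C2 D1 hLi hKj (hXd.mono hC2X hD1X) sC2 sD1
              (Or.inl (hmv L K (hv2 L hLi) (hv3 K hKj)))
          | exact key C2 D2 hLi hKj (hXd.mono hC2X hD2X) sC2 sD2
              (Or.inl (hmv L K (hv2 L hLi) (hv4 K hKj)))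
          | exact key D1 C1 hLi hKj (hXd.symm.mono hD1X hC1X) sD1 sC1
              (Or.inl (hmv K L (hv1 K hKj) (hv3 L hLi)).symm)
          | exact key D1 C2 hLi hKj (hXd.symm.mono hD1X hC2X) sD1 sC2
              (Or.inl (hmv K L (hv2 K hKj) (hv3 L hLi)).symm)
          | exact key D2 C1 hLi hKj (hXd.symm.mono hD2X hC1X) sD2 sC1
              (Or.inl (hmv K L (hv1 K hKj) (hv4 L hLi)).symm)
          | exact key D2 C2 hLi hKj (hXd.symm.mono hD2X hC2X) sD2 sC2
              (Or.inl (hmv K L (hv2 K hKj) (hv4 L hLi)).symm)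
    intro m
    have hu0' : C2 ∪ C1 = S17.XF A η 0 := by rw [Finset.union_comm]; exact hu0
    have hu1' : D2 ∪ D1 = S17.XF A η 1 := by rw [Finset.union_comm]; exact hu1
    fin_cases m
    · exact S17.class_unique hG hu0 hd0 hi1 hi2 hmix
    · exact S17.class_unique hG hu0' hd0.symm hi2 hi1 hmix
    · exact S17.class_unique hG hu1 hd1 hi3 hi4 hmix
    · exact S17.class_unique hG hu1' hd1.symm hi4 hi3 hmix
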